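/- Let A be a positive definite matrix of order m+n with SVD A = UΛUᵀ, where m,n ∈ ℕ₊, n = l·m, U = [u_1,…,u_{m+n}] is orthogonal, Λ = diag(cλ·1ₘ, λ·1ₙ), c ≥ 1000, λ > 0. Let ΔU = [Δu_i], ΔΛ = diag(0ₘ, Δλ·1ₙ), and s ≤ −0.25. Define B := (UΛUᵀ)^s, B₁ := ((U+ΔU)Λ(U+ΔU)ᵀ)^s, and B₂ := (U(Λ+ΔΛ)Uᵀ)^s. If U+ΔU is orthogonal, ‖Δu_i‖₂ ≤ 0.1 and ⟨u_i, Δu_i⟩ ≥ −0.005 for all i, Δλ = (0.02c − 1)λ, and l = (c/0.02)^s, then 2·‖B₁−B‖_F/‖B‖_F ≤ 0.4 ≤ ‖B₂−B‖_F/‖B‖_F, and 6·(1 − ⟨B,B₁⟩/(‖B‖_F‖B₁‖_F)) ≤ 0.06 ≤ 1 − ⟨B,B₂⟩/(‖B‖_F‖B₂‖_F). -/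

import Mathlib

set_option linter.unusedSectionVars false
set_option maxHeartbeats 1000000
open Matrix

/-- Frobenius norm of a real matrix. -/
noncomputable def frobNorm {m n : Type*} [Fintype m] [Fintype n] (A : Matrix m n ℝ) : ℝ :=
  Real.sqrt (∑ i, ∑ j, (A i j) ^ 2)

/-- Frobenius inner product `⟨A, B⟩ = tr(AᵀB)`. -/
noncomputable def frobInner {m n : Type*} [Fintype m] [Fintype n] (A B : Matrix m n ℝ) : ℝ :=
  (Aᵀ * B).trace

section helpers
variable {ι : Type*} [Fintype ι] [DecidableEq ι]

lemma frobInner_comm (X Y : Matrix ι ι ℝ) : frobInner X Y = frobInner Y X := by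
  unfold frobInner
  rw [← Matrix.trace_transpose (Xᵀ * Y), Matrix.transpose_mul, Matrix.transpose_transpose]

lemma frobInner_self_eq (X : Matrix ι ι ℝ) : frobInner X X = ∑ i, ∑ j, (X i j)^2 := by
  unfold frobInner
  simp only [Matrix.trace, Matrix.diag, Matrix.mul_apply, Matrix.transpose_apply, sq]
  exact Finset.sum_comm

lemma frobNorm_eq_sqrt (X : Matrix ι ι ℝ) : frobNorm X = Real.sqrt (frobInner X X) := by
  rw [frobInner_self_eq]; rfl

lemma frobInner_conj (U X Y : Matrix ι ι ℝ) (hU : Uᵀ * U = 1) :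
    frobInner (U*X*Uᵀ) (U*Y*Uᵀ) = frobInner X Y := by
  unfold frobInner
  have h : (U*X*Uᵀ)ᵀ * (U*Y*Uᵀ) = U * (Xᵀ*Y) * Uᵀ := by
    calc (U*X*Uᵀ)ᵀ * (U*Y*Uᵀ) = U * Xᵀ * (Uᵀ * U) * Y * Uᵀ := by
          simp [Matrix.transpose_mul, Matrix.mul_assoc]
    _ = U * (Xᵀ*Y) * Uᵀ := by rw [hU]; simp [Matrix.mul_assoc]
  rw [h, Matrix.trace_mul_cycle, hU, one_mul]

lemma frobInner_diag (f g : ι → ℝ) :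
    frobInner (Matrix.diagonal f) (Matrix.diagonal g) = ∑ i, f i * g i := by
  unfold frobInner
  rw [Matrix.diagonal_transpose, Matrix.diagonal_mul_diagonal, Matrix.trace_diagonal]

lemma frobInner_diag_conj (d : ι → ℝ) (W : Matrix ι ι ℝ) :
    frobInner (Matrix.diagonal d) (W * Matrix.diagonal d * Wᵀ)
      = ∑ i, ∑ j, d i * d j * (W i j)^2 := by
  unfold frobInner
  rw [Matrix.diagonal_transpose]
  simp only [Matrix.trace, Matrix.diag_apply]
  refine Finset.sum_congr rfl fun i _ => ?_
  rw [Matrix.diagonal_mul, Matrix.mul_apply, Finset.mul_sum]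
  refine Finset.sum_congr rfl fun j _ => ?_
  rw [Matrix.mul_diagonal, Matrix.transpose_apply]
  ring

lemma frobInner_sub_sub (X Y : Matrix ι ι ℝ) :
    frobInner (X - Y) (X - Y)
      = frobInner X X - 2 * frobInner X Y + frobInner Y Y := by
  have hsymm : (Xᵀ * Y).trace = (Yᵀ * X).trace := by
    rw [← Matrix.trace_transpose (Xᵀ * Y), Matrix.transpose_mul, Matrix.transpose_transpose]
  unfold frobInner
  simp only [Matrix.transpose_sub, Matrix.sub_mul, Matrix.mul_sub, Matrix.trace_sub]
  linarith

lemma sum_sum_const {m n : ℕ} (f : Fin m ⊕ Fin n → ℝ) (x y : ℝ)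
    (hf : ∀ i, f (Sum.inl i) = x) (hg : ∀ j, f (Sum.inr j) = y) :
    ∑ i, f i = m*x + n*y := by
  rw [Fintype.sum_sum_type]
  simp [hf, hg, Finset.sum_const, Finset.card_univ, nsmul_eq_mul]

lemma aux474 (u : ℝ) (hu0 : 0 < u) (hu4 : u^(4:ℕ) = 1/20) : u ≤ 0.474 := by
  nlinarith [sq_nonneg (u - 0.474), sq_nonneg (u + 0.474), sq_nonneg (u^2 - 0.474^2), sq_nonneg u]

lemma aux6885 (q : ℝ) (h0 : 0 ≤ q) (h : q^2 ≤ 0.474) : q ≤ 0.6885 := by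
  nlinarith [sq_nonneg (q - 0.6885)]

lemma key1 (r : ℝ) (hr0 : 0 < r) (hr : r ≤ 0.474) : 0.16*(r+1) ≤ (1-r)^2 := by
  nlinarith [sq_nonneg (r - 0.474)]

lemma key2 (q : ℝ) (hq0 : 0 ≤ q) (hq : q ≤ 0.6885) : 2*q ≤ 0.94*(1+q^2) := by
  nlinarith [sq_nonneg (q - 0.6885)]

end helpers

/-- Comparison of eigenvector-matrix perturbation (`B₁`) and singular-value
perturbation (`B₂`) of a positive definite `A = U Λ Uᵀ` with singular values `cλ`
(multiplicity `m`) and `λ` (multiplicity `n = l·m`), `c ≥ 1000`, `s ≤ −0.25`,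
`Δλ = (0.02c − 1)λ`, `l = (c/0.02)^s`. -/
theorem eigvec_vs_singular_value_quantization
    {m n : ℕ} (hm : 0 < m) (hn : 0 < n) (l : ℝ) (hl : (n : ℝ) = l * m)
    (c lam s : ℝ) (hc : 1000 ≤ c) (hlam : 0 < lam) (hs : s ≤ -0.25)
    (hls : l = (c / 0.02) ^ s)
    (U ΔU : Matrix (Fin m ⊕ Fin n) (Fin m ⊕ Fin n) ℝ)
    (hU : Uᵀ * U = 1)
    (hU' : (U + ΔU)ᵀ * (U + ΔU) = 1)
    (hΔUnorm : ∀ i, Real.sqrt (∑ j, (ΔU j i) ^ 2) ≤ 0.1)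
    (hΔUinner : ∀ i, (-0.005 : ℝ) ≤ ∑ j, U j i * ΔU j i)
    (A : Matrix (Fin m ⊕ Fin n) (Fin m ⊕ Fin n) ℝ)
    (hA : A = U * Matrix.diagonal
      (Sum.elim (fun _ => c * lam) (fun _ => lam)) * Uᵀ)
    (hApd : A.PosDef)
    (B B₁ B₂ : Matrix (Fin m ⊕ Fin n) (Fin m ⊕ Fin n) ℝ)
    (hB : B = U * Matrix.diagonal
      (Sum.elim (fun _ => (c * lam) ^ s) (fun _ => lam ^ s)) * Uᵀ)
    (hB₁ : B₁ = (U + ΔU) * Matrix.diagonal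
      (Sum.elim (fun _ => (c * lam) ^ s) (fun _ => lam ^ s)) * (U + ΔU)ᵀ)
    (hB₂ : B₂ = U * Matrix.diagonal
      (Sum.elim (fun _ => (c * lam) ^ s) (fun _ => (0.02 * c * lam) ^ s)) * Uᵀ) :
    2 * (frobNorm (B₁ - B) / frobNorm B) ≤ 0.4 ∧
    (0.4 : ℝ) ≤ frobNorm (B₂ - B) / frobNorm B ∧
    6 * (1 - frobInner B B₁ / (frobNorm B * frobNorm B₁)) ≤ 0.06 ∧
    (0.06 : ℝ) ≤ 1 - frobInner B B₂ / (frobNorm B * frobNorm B₂) := by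
  -- scalar setup
  have hc0 : (0:ℝ) < c := by linarith
  have hm' : (0:ℝ) < m := by exact_mod_cast hm
  set t := lam ^ s with htdef
  have ht : 0 < t := Real.rpow_pos_of_pos hlam s
  set cs := c ^ s with hcsdef
  have hcs : 0 < cs := Real.rpow_pos_of_pos hc0 s
  set fs := (50:ℝ) ^ s with hfsdef
  have hfs : (0:ℝ) < fs := Real.rpow_pos_of_pos (by norm_num) s
  set r := cs / fs with hrdef
  have hr0 : 0 < r := div_pos hcs hfs
  have hcsr : cs = r * fs := by rw [hrdef, div_mul_cancel₀ _ hfs.ne']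
  have hr_eq : (c/50 : ℝ) ^ s = r := by
    rw [hrdef, hcsdef, hfsdef, Real.div_rpow hc0.le (by norm_num)]
  have hr474 : r ≤ 0.474 := by
    have h20 : (20:ℝ) ≤ c / 50 := by linarith
    have h1 : (c/50:ℝ)^s ≤ (20:ℝ)^s :=
      Real.rpow_le_rpow_of_nonpos (by norm_num) h20 (by linarith)
    have h2 : (20:ℝ)^s ≤ (20:ℝ)^(-(1/4):ℝ) :=
      Real.rpow_le_rpow_of_exponent_le (by norm_num) (by linarith)
    have hu0 : 0 < (20:ℝ)^(-(1/4):ℝ) := Real.rpow_pos_of_pos (by norm_num) _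
    have hu4 : ((20:ℝ)^(-(1/4):ℝ))^(4:ℕ) = 1/20 := by
      rw [← Real.rpow_natCast ((20:ℝ)^(-(1/4):ℝ)) 4, ← Real.rpow_mul (by norm_num : (0:ℝ) ≤ 20)]
      norm_num
    have h3 : (20:ℝ)^(-(1/4):ℝ) ≤ 0.474 := aux474 _ hu0 hu4
    rw [← hr_eq]; linarith
  set q := Real.sqrt r with hqdef
  have hq0 : 0 < q := Real.sqrt_pos.mpr hr0
  have hq2 : q^2 = r := Real.sq_sqrt hr0.le
  have hq685 : q ≤ 0.6885 := aux6885 q hq0.le (by rw [hq2]; exact hr474)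
  -- value facts
  have ha : (c*lam)^s = cs * t := by rw [Real.mul_rpow hc0.le hlam.le]
  have he : (0.02*c*lam)^s = r * t := by
    have h002 : (0.02*c*lam : ℝ) = (c/50)*lam := by ring
    rw [h002, Real.mul_rpow (by positivity) hlam.le, hr_eq]
  have hnval : (n:ℝ) = fs * cs * m := by
    have h50 : (c/0.02 : ℝ) = 50 * c := by ring
    rw [hl, hls, h50, Real.mul_rpow (by norm_num) hc0.le]
  -- diagonal vectors
  set d : (Fin m ⊕ Fin n) → ℝ :=
    Sum.elim (fun _ => (c*lam)^s) (fun _ => lam^s) with hd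
  set d₂ : (Fin m ⊕ Fin n) → ℝ :=
    Sum.elim (fun _ => (c*lam)^s) (fun _ => (0.02*c*lam)^s) with hd₂
  have hdpos : ∀ i, 0 < d i := by
    rintro (i | j) <;> simp only [hd, Sum.elim_inl, Sum.elim_inr]
    · exact Real.rpow_pos_of_pos (mul_pos hc0 hlam) s
    · exact Real.rpow_pos_of_pos hlam s
  -- frobInner B B
  have hBB : frobInner B B = ∑ i, d i * d i := by
    rw [hB, frobInner_conj _ _ _ hU, frobInner_diag]
  have hTval : frobInner B B = (m:ℝ) * (t^2*fs^2*r) * (r+1) := by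
    rw [hBB, sum_sum_const (fun i => d i * d i) ((cs*t)*(cs*t)) (t*t)
      (fun i => by simp [hd, ha]) (fun j => by simp [hd, htdef])]
    rw [hnval, hcsr]; ring
  have hTpos : 0 < frobInner B B := by
    rw [hTval]; positivity
  have hnB : frobNorm B = Real.sqrt (frobInner B B) := frobNorm_eq_sqrt B
  have hnBpos : 0 < frobNorm B := by rw [hnB]; exact Real.sqrt_pos.mpr hTpos
  -- ============ B₂ computations ============
  have hB₂B : B₂ - B = U * Matrix.diagonal (fun i => d₂ i - d i) * Uᵀ := by
    rw [hB, hB₂, ← Matrix.sub_mul, ← Matrix.mul_sub, Matrix.diagonal_sub]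
  have hN2 : frobInner (B₂ - B) (B₂ - B) = (m:ℝ)*(t^2*fs^2*r)*(1-r)^2 := by
    rw [hB₂B, frobInner_conj _ _ _ hU, frobInner_diag,
      sum_sum_const (fun i => (d₂ i - d i) * (d₂ i - d i)) 0 ((r*t - t)*(r*t - t))
      (fun i => by simp [hd, hd₂]) (fun j => by simp [hd, hd₂, he, htdef])]
    rw [hnval, hcsr]; ring
  have hP2 : frobInner B B₂ = (m:ℝ)*(t^2*fs^2)*(2*r^2) := by
    rw [hB, hB₂, frobInner_conj _ _ _ hU, frobInner_diag,
      sum_sum_const (fun i => d i * d₂ i) ((cs*t)*(cs*t)) (t*(r*t))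
      (fun i => by simp [hd, hd₂, ha]) (fun j => by simp [hd, hd₂, he, htdef])]
    rw [hnval, hcsr]; ring
  have hN22 : frobInner B₂ B₂ = (m:ℝ)*(t^2*fs^2*r^2)*(r+1) := by
    rw [hB₂, frobInner_conj _ _ _ hU, frobInner_diag,
      sum_sum_const (fun i => d₂ i * d₂ i) ((cs*t)*(cs*t)) ((r*t)*(r*t))
      (fun i => by simp [hd₂, ha]) (fun j => by simp [hd₂, he])]
    rw [hnval, hcsr]; ring
  -- goal 2
  have goal2 : (0.4 : ℝ) ≤ frobNorm (B₂ - B) / frobNorm B := by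
    have hkey : 0.16 * frobInner B B ≤ frobInner (B₂ - B) (B₂ - B) := by
      have key := key1 r hr0 hr474
      have hKnn : (0:ℝ) ≤ (m:ℝ)*(t^2*fs^2*r) := by positivity
      calc 0.16 * frobInner B B = ((m:ℝ)*(t^2*fs^2*r)) * (0.16*(r+1)) := by
            rw [hTval]; ring
        _ ≤ ((m:ℝ)*(t^2*fs^2*r)) * ((1-r)^2) := by
            exact mul_le_mul_of_nonneg_left key hKnn
        _ = frobInner (B₂ - B) (B₂ - B) := by rw [hN2]
    rw [le_div_iff₀ hnBpos, hnB, frobNorm_eq_sqrt]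
    have h04 : (0.4:ℝ) * Real.sqrt (frobInner B B)
        = Real.sqrt (0.16 * frobInner B B) := by
      rw [Real.sqrt_mul (by norm_num), show Real.sqrt 0.16 = 0.4 from by
        rw [show (0.16:ℝ) = 0.4^2 by norm_num, Real.sqrt_sq (by norm_num)]]
    rw [h04]
    exact Real.sqrt_le_sqrt hkey
  -- goal 4
  have goal4 : (0.06 : ℝ) ≤ 1 - frobInner B B₂ / (frobNorm B * frobNorm B₂) := by
    have hSval : frobNorm B * frobNorm B₂ = (m:ℝ)*(t^2*fs^2)*(r*q*(r+1)) := by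
      rw [hnB, frobNorm_eq_sqrt, ← Real.sqrt_mul hTpos.le]
      have harg : frobInner B B * frobInner B₂ B₂
          = ((m:ℝ)*(t^2*fs^2)*(r*q*(r+1)))^2 := by
        rw [hTval, hN22, ← hq2]; ring
      rw [harg, Real.sqrt_sq (by positivity)]
    have hSpos : 0 < frobNorm B * frobNorm B₂ := by
      rw [hSval]; positivity
    have hPle : frobInner B B₂ ≤ 0.94 * (frobNorm B * frobNorm B₂) := by
      have key := key2 q hq0.le hq685
      have hKpos : (0:ℝ) ≤ (m:ℝ)*(t^2*fs^2)*q^3 := by positivity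
      calc frobInner B B₂ = ((m:ℝ)*(t^2*fs^2)*q^3) * (2*q) := by
            rw [hP2, ← hq2]; ring
        _ ≤ ((m:ℝ)*(t^2*fs^2)*q^3) * (0.94*(1+q^2)) :=
            mul_le_mul_of_nonneg_left key hKpos
        _ = 0.94 * (frobNorm B * frobNorm B₂) := by rw [hSval, ← hq2]; ring
    have : frobInner B B₂ / (frobNorm B * frobNorm B₂) ≤ 0.94 :=
      (div_le_iff₀ hSpos).mpr (by linarith)
    linarith
  -- ============ B₁ computations ============
  set V := U + ΔU with hV
  have hUUt : U * Uᵀ = 1 := mul_eq_one_comm.mp hU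
  set W := Uᵀ * V with hWdef
  have hUW : U * W = V := by rw [hWdef, ← Matrix.mul_assoc, hUUt, one_mul]
  have hWo : Wᵀ * W = 1 := by
    calc Wᵀ * W = Vᵀ * (U * Uᵀ) * V := by
          rw [hWdef]; simp [Matrix.transpose_mul, Matrix.mul_assoc]
    _ = 1 := by rw [hUUt, Matrix.mul_one]; exact hU'
  have hB₁' : B₁ = U * (W * Matrix.diagonal d * Wᵀ) * Uᵀ := by
    rw [hB₁, ← hUW]
    simp [Matrix.transpose_mul, Matrix.mul_assoc]
  have hI : frobInner B B₁ = ∑ i, ∑ j, d i * d j * (W i j)^2 := by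
    rw [hB, hB₁', frobInner_conj _ _ _ hU, frobInner_diag_conj]
  have hB₁B₁ : frobInner B₁ B₁ = frobInner B B := by
    rw [hB₁', hB, frobInner_conj _ _ _ hU, frobInner_conj _ _ _ hU]
    exact frobInner_conj W _ _ hWo
  -- diagonal lower bound on W
  have hWdiag_lb : ∀ i, (0.995:ℝ) ≤ W i i := by
    intro i
    have h1 : W i i = (Uᵀ*U) i i + (Uᵀ*ΔU) i i := by
      rw [hWdef, hV, Matrix.mul_add]; rfl
    have h2 : (Uᵀ*U : Matrix _ _ ℝ) i i = 1 := by rw [hU]; exact Matrix.one_apply_eq i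
    have h3 : (Uᵀ*ΔU : Matrix _ _ ℝ) i i = ∑ j, U j i * ΔU j i := by
      rw [Matrix.mul_apply]
      exact Finset.sum_congr rfl fun j _ => by rw [Matrix.transpose_apply]
    have h4 := hΔUinner i
    rw [h1, h2, h3]; linarith
  have hIlb : 0.990025 * frobInner B B ≤ frobInner B B₁ := by
    rw [hI, hBB, Finset.mul_sum]
    refine Finset.sum_le_sum fun i _ => ?_
    have h995 : (0.990025:ℝ) ≤ (W i i)^2 := by
      have h := hWdiag_lb i
      have h2 : (0.995:ℝ)^2 ≤ (W i i)^2 := pow_le_pow_left₀ (by norm_num) h 2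
      norm_num at h2; linarith
    have h1 : 0.990025 * (d i * d i) ≤ d i * d i * (W i i)^2 := by
      have hdd : (0:ℝ) ≤ d i * d i := (mul_pos (hdpos i) (hdpos i)).le
      calc 0.990025 * (d i * d i) = (d i * d i) * 0.990025 := by ring
        _ ≤ (d i * d i) * (W i i)^2 := mul_le_mul_of_nonneg_left h995 hdd
        _ = d i * d i * (W i i)^2 := by ring
    have h2 : d i * d i * (W i i)^2 ≤ ∑ j, d i * d j * (W i j)^2 :=
      Finset.single_le_sum
        (fun j _ => mul_nonneg (mul_nonneg (hdpos i).le (hdpos j).le) (sq_nonneg _))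
        (Finset.mem_univ i)
    linarith
  have hsub : frobInner (B₁ - B) (B₁ - B)
      = 2 * frobInner B B - 2 * frobInner B B₁ := by
    rw [frobInner_sub_sub, hB₁B₁, frobInner_comm B₁ B]; ring
  -- goal 1
  have goal1 : 2 * (frobNorm (B₁ - B) / frobNorm B) ≤ 0.4 := by
    have hN1 : frobInner (B₁ - B) (B₁ - B) ≤ 0.04 * frobInner B B := by
      rw [hsub]; linarith
    have hle : frobNorm (B₁ - B) ≤ 0.2 * frobNorm B := by
      rw [frobNorm_eq_sqrt, hnB]
      have h04 : (0.2:ℝ) * Real.sqrt (frobInner B B)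
          = Real.sqrt (0.04 * frobInner B B) := by
        rw [Real.sqrt_mul (by norm_num), show Real.sqrt 0.04 = 0.2 from by
          rw [show (0.04:ℝ) = 0.2^2 by norm_num, Real.sqrt_sq (by norm_num)]]
      rw [h04]
      exact Real.sqrt_le_sqrt hN1
    have : frobNorm (B₁ - B) / frobNorm B ≤ 0.2 :=
      (div_le_iff₀ hnBpos).mpr (by linarith)
    linarith
  -- goal 3
  have goal3 : 6 * (1 - frobInner B B₁ / (frobNorm B * frobNorm B₁)) ≤ 0.06 := by
    have hnB₁ : frobNorm B₁ = frobNorm B := by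
      rw [frobNorm_eq_sqrt, hnB, hB₁B₁]
    have hprod : frobNorm B * frobNorm B₁ = frobInner B B := by
      rw [hnB₁, hnB, Real.mul_self_sqrt hTpos.le]
    rw [hprod]
    have : (0.990025:ℝ) ≤ frobInner B B₁ / frobInner B B :=
      (le_div_iff₀ hTpos).mpr (by linarith)
    linarith
  exact ⟨goal1, goal2, goal3, goal4⟩
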